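/- Let 𝔊 be a finite (q+1)-regular graph with shift spaces 𝔓⁺ (one-sided non-backtracking edge chains) and 𝔓⁻, and transfer operators ℒ₊, ℒ₋ acting on locally constant functions as in the definitions. Then the dual operators are adjoint with respect to the geodesic pairing: ⟨ℒ₊′u₊, u₋⟩_geod = ⟨u₊, ℒ₋′u₋⟩_geod for all distributions u₊ ∈ 𝒟′(𝔓⁺), u₋ ∈ 𝒟′(𝔓⁻). In particular, if u₊, u₋ are (co)resonant states for distinct eigenvalues z₁ ≠ z₂, then ⟨u₊, u₋⟩_geod = 0. -/
import Mathlib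


open scoped Classical

/-! Framework: one-sided shift spaces of non-backtracking edge chains on a finite
`(q+1)`-regular graph, transfer operators, distributions, and pairings.

A forward chain `(e₁, e₂, …) ∈ 𝔓⁺` is encoded by its vertex sequence
`c : ℕ → V` with `e_{i+1} = (c i, c (i+1))`; then `π₊(c) = c 0` and the first edge is
`(c 0, c 1)`.  A backward chain `(…, e₂, e₁) ∈ 𝔓⁻` is encoded by the vertex sequence
`c : ℕ → V` read away from its terminal vertex, i.e. `e_i = (c i, c (i-1))`; then
`π₋(c) = c 0` and its last edge is `(c 1, c 0)`. With these conventions both shift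
spaces are encoded by the same type of non-backtracking vertex sequences, and both
transfer operators are given by the same formula (extension by one edge at `c 0`). -/

/-- A non-backtracking infinite chain of concatenated edges, as a vertex sequence. -/
def IsEdgeChain {V : Type} (G : SimpleGraph V) (c : ℕ → V) : Prop :=
  (∀ i, G.Adj (c i) (c (i + 1))) ∧ ∀ i, c (i + 2) ≠ c i

/-- The shift space of non-backtracking chains. -/
abbrev ChainSp {V : Type} (G : SimpleGraph V) : Type := {c : ℕ → V // IsEdgeChain G c}

/-- Extending a chain by a new vertex `v` at the front. -/
def consChain {V : Type} {G : SimpleGraph V} (v : V) (c : ChainSp G)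
    (h1 : G.Adj v (c.1 0)) (h2 : c.1 1 ≠ v) : ChainSp G :=
  ⟨fun i => Nat.casesOn i v fun j => c.1 j, by
    constructor
    · intro i
      cases i with
      | zero => exact h1
      | succ j => exact c.2.1 j
    · intro i
      cases i with
      | zero => exact h2
      | succ j => exact c.2.2 j⟩

/-- The space `C^lc(𝔓)` of locally constant functions: on the compact shift space of a
finite graph these are exactly the functions depending on finitely many initial
coordinates. -/
noncomputable def lcSub {V : Type} (G : SimpleGraph V) : Submodule ℂ (ChainSp G → ℂ) where
  carrier := {F | ∃ n : ℕ, ∀ c c' : ChainSp G, (∀ i < n, c.1 i = c'.1 i) → F c = F c'}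
  zero_mem' := ⟨0, fun _ _ _ => rfl⟩
  add_mem' := by
    rintro F F' ⟨n, hn⟩ ⟨m, hm⟩
    refine ⟨max n m, fun c c' h => ?_⟩
    simp only [Pi.add_apply]
    rw [hn c c' fun i hi => h i (lt_of_lt_of_le hi (le_max_left n m)),
      hm c c' fun i hi => h i (lt_of_lt_of_le hi (le_max_right n m))]
  smul_mem' := by
    rintro a F ⟨n, hn⟩
    refine ⟨n, fun c c' h => ?_⟩
    simp only [Pi.smul_apply]
    rw [hn c c' h]

/-- The transfer operator on functions: `(ℒF)(c) = Σ_{e₀} F(e₀, c)`, summing over all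
one-edge extensions of the chain `c` that remain non-backtracking. -/
noncomputable def transferFun {V : Type} (G : SimpleGraph V) [Fintype V]
    (F : ChainSp G → ℂ) : ChainSp G → ℂ := fun c =>
  ∑ v : V, if h : G.Adj v (c.1 0) ∧ c.1 1 ≠ v then F (consChain v c h.1 h.2) else 0

/-- The transfer operator `ℒ` as a linear endomorphism of `C^lc(𝔓)`. -/
noncomputable def transferLM {V : Type} (G : SimpleGraph V) [Fintype V] :
    lcSub G →ₗ[ℂ] lcSub G where
  toFun F := ⟨transferFun G F.1, by
    obtain ⟨n, hn⟩ := F.2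
    refine ⟨n + 2, fun c c' h => ?_⟩
    have h0 : c.1 0 = c'.1 0 := h 0 (by omega)
    have h1 : c.1 1 = c'.1 1 := h 1 (by omega)
    unfold transferFun
    refine Finset.sum_congr rfl fun v _ => ?_
    by_cases hc : G.Adj v (c.1 0) ∧ c.1 1 ≠ v
    · have hc' : G.Adj v (c'.1 0) ∧ c'.1 1 ≠ v := by rw [← h0, ← h1]; exact hc
      rw [dif_pos hc, dif_pos hc']
      refine hn _ _ fun i hi => ?_
      cases i with
      | zero => rfl
      | succ j => exact h j (by omega)
    · have hc' : ¬(G.Adj v (c'.1 0) ∧ c'.1 1 ≠ v) := by rw [← h0, ← h1]; exact hc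
      rw [dif_neg hc, dif_neg hc']⟩
  map_add' F F' := by
    apply Subtype.ext
    funext c
    simp only [Submodule.coe_add, Pi.add_apply, transferFun]
    rw [← Finset.sum_add_distrib]
    refine Finset.sum_congr rfl fun v _ => ?_
    by_cases hc : G.Adj v (c.1 0) ∧ c.1 1 ≠ v
    · rw [dif_pos hc, dif_pos hc, dif_pos hc]
    · rw [dif_neg hc, dif_neg hc, dif_neg hc]; ring
  map_smul' a F := by
    apply Subtype.ext
    funext c
    simp only [Submodule.coe_smul, Pi.smul_apply, transferFun, RingHom.id_apply,
      Finset.smul_sum]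
    refine Finset.sum_congr rfl fun v _ => ?_
    by_cases hc : G.Adj v (c.1 0) ∧ c.1 1 ≠ v
    · rw [dif_pos hc, dif_pos hc]
    · rw [dif_neg hc, dif_neg hc]; simp

/-- The space of distributions `𝒟′(𝔓)`: the algebraic dual of `C^lc(𝔓)`. -/
abbrev DistSp {V : Type} (G : SimpleGraph V) : Type := lcSub G →ₗ[ℂ] ℂ

/-- The dual transfer operator `ℒ′` on distributions. -/
noncomputable def dualTransfer {V : Type} (G : SimpleGraph V) [Fintype V]
    (u : DistSp G) : DistSp G := (u : lcSub G →ₗ[ℂ] ℂ).comp (transferLM G)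

/-- Indicator (in `C^lc`) of chains with base vertex `x`. -/
noncomputable def vtxInd {V : Type} (G : SimpleGraph V) (x : V) : lcSub G :=
  ⟨fun c => if c.1 0 = x then 1 else 0,
    ⟨1, fun c c' h => by simp only [h 0 Nat.one_pos]⟩⟩

/-- The pushforward `π±,*u : 𝔛 → ℂ`, `x ↦ ⟨u, 𝟙_{π±⁻¹(x)}⟩`. -/
noncomputable def pushVtx {V : Type} (G : SimpleGraph V) (u : DistSp G) (x : V) : ℂ :=
  u (vtxInd G x)

/-- Indicator of forward chains whose first edge is `(a, b)`. -/
noncomputable def edgeIndP {V : Type} (G : SimpleGraph V) (a b : V) : lcSub G :=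
  ⟨fun c => if c.1 0 = a ∧ c.1 1 = b then 1 else 0,
    ⟨2, fun c c' h => by simp only [h 0 (by omega : (0:ℕ) < 2), h 1 (by omega : (1:ℕ) < 2)]⟩⟩

/-- Indicator of backward chains whose last edge is `(a, b)` (so `c 1 = a`, `c 0 = b`). -/
noncomputable def edgeIndM {V : Type} (G : SimpleGraph V) (a b : V) : lcSub G :=
  ⟨fun c => if c.1 1 = a ∧ c.1 0 = b then 1 else 0,
    ⟨2, fun c c' h => by simp only [h 0 (by omega : (0:ℕ) < 2), h 1 (by omega : (1:ℕ) < 2)]⟩⟩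

/-- The vertex pairing `⟨u₊, u₋⟩_(𝔛) = Σ_{x∈𝔛} (π₊,*u₊)(x)·(π₋,*u₋)(x)`. -/
noncomputable def vertexPairing {V : Type} (G : SimpleGraph V) [Fintype V]
    (up um : DistSp G) : ℂ :=
  ∑ x : V, pushVtx G up x * pushVtx G um x

/-- The modified edge pairing `⟨u₊,u₋⟩_(op,𝔈) = Σ_{e∈𝔈} (π^𝔈₊,*u₊)(e^op)·(π^𝔈₋,*u₋)(e)`,
the sum running over the oriented edges `e = (a, b)` of `𝔊`. -/
noncomputable def modEdgePairing {V : Type} (G : SimpleGraph V) [Fintype V]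
    (up um : DistSp G) : ℂ :=
  ∑ e : {p : V × V // G.Adj p.1 p.2},
    up (edgeIndP G e.1.2 e.1.1) * um (edgeIndM G e.1.1 e.1.2)

/-- For a fixed forward chain `c₊`, the locally constant function
`c₋ ↦ 𝟙_𝔓(c₋, c₊)` on `𝔓⁻`: the pair `(c₋, c₊)` joins to a bi-infinite
non-backtracking chain iff the base vertices agree and the adjacent edges do not
backtrack. -/
noncomputable def geodInner {V : Type} (G : SimpleGraph V) (cp : ChainSp G) : lcSub G :=
  ⟨fun cm => if cm.1 0 = cp.1 0 ∧ cm.1 1 ≠ cp.1 1 then 1 else 0,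
    ⟨2, fun c c' h => by simp only [h 0 (by omega : (0:ℕ) < 2), h 1 (by omega : (1:ℕ) < 2)]⟩⟩

/-- For a fixed forward chain `c₊`, `c₋ ↦ 𝟙_{𝔓^(2)}(c₋, c₊)` (matching base vertex). -/
noncomputable def sqInner {V : Type} (G : SimpleGraph V) (cp : ChainSp G) : lcSub G :=
  ⟨fun cm => if cm.1 0 = cp.1 0 then 1 else 0,
    ⟨1, fun c c' h => by simp only [h 0 (by omega : (0:ℕ) < 1)]⟩⟩

/-- The geodesic pairing `⟨u₊, u₋⟩_geod = ⟨u₊ ⊗ u₋, 𝟙_𝔓⟩`, computed as the iterated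
evaluation `⟨u₊, c₊ ↦ ⟨u₋, 𝟙_𝔓(·, c₊)⟩⟩`. -/
noncomputable def geodPairing {V : Type} (G : SimpleGraph V)
    (up um : DistSp G) : ℂ :=
  up ⟨fun cp => um (geodInner G cp),
    ⟨2, fun c c' h => by
      refine congrArg um (Subtype.ext (funext fun cm => ?_))
      show (if cm.1 0 = c.1 0 ∧ cm.1 1 ≠ c.1 1 then (1:ℂ) else 0)
          = if cm.1 0 = c'.1 0 ∧ cm.1 1 ≠ c'.1 1 then 1 else 0
      rw [h 0 (by omega), h 1 (by omega)]⟩⟩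

/-- The pairing `⟨u₊ ⊗ u₋, 𝟙_{𝔓^(2)}⟩` over pairs of chains with common base vertex. -/
noncomputable def sqPairing {V : Type} (G : SimpleGraph V)
    (up um : DistSp G) : ℂ :=
  up ⟨fun cp => um (sqInner G cp),
    ⟨1, fun c c' h => by
      refine congrArg um (Subtype.ext (funext fun cm => ?_))
      show (if cm.1 0 = c.1 0 then (1:ℂ) else 0) = if cm.1 0 = c'.1 0 then 1 else 0
      rw [h 0 (by omega)]⟩⟩

private lemma sum_step {V : Type} [Fintype V] (G : SimpleGraph V) (cp cm : ChainSp G) :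
    (∑ v : V, if _h : G.Adj v (cp.1 0) ∧ cp.1 1 ≠ v then
        (if cm.1 0 = v ∧ cm.1 1 ≠ cp.1 0 then (1:ℂ) else 0) else 0)
    = ∑ w : V, if _h : G.Adj w (cm.1 0) ∧ cm.1 1 ≠ w then
        (if w = cp.1 0 ∧ cm.1 0 ≠ cp.1 1 then (1:ℂ) else 0) else 0 := by
  trans (if G.Adj (cp.1 0) (cm.1 0) ∧ cm.1 1 ≠ cp.1 0 ∧ cm.1 0 ≠ cp.1 1 then (1:ℂ) else 0)
  · by_cases hC : G.Adj (cp.1 0) (cm.1 0) ∧ cm.1 1 ≠ cp.1 0 ∧ cm.1 0 ≠ cp.1 1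
    · rw [if_pos hC, Finset.sum_eq_single (cm.1 0)]
      · rw [dif_pos ⟨hC.1.symm, (hC.2.2).symm⟩, if_pos ⟨rfl, hC.2.1⟩]
      · intro v _ hv
        split_ifs with h1 h2
        · exact absurd h2.1.symm hv
        · rfl
        · rfl
      · intro h; exact absurd (Finset.mem_univ _) h
    · rw [if_neg hC]
      refine Finset.sum_eq_zero fun v _ => ?_
      split_ifs with h1 h2
      · obtain ⟨h2a, h2b⟩ := h2
        subst h2a
        exact absurd ⟨h1.1.symm, h2b, h1.2.symm⟩ hC
      · rfl
      · rfl
  · by_cases hC : G.Adj (cp.1 0) (cm.1 0) ∧ cm.1 1 ≠ cp.1 0 ∧ cm.1 0 ≠ cp.1 1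
    · rw [if_pos hC, Finset.sum_eq_single (cp.1 0)]
      · rw [dif_pos ⟨hC.1, hC.2.1⟩, if_pos ⟨rfl, hC.2.2⟩]
      · intro w _ hw
        split_ifs with h1 h2
        · exact absurd h2.1 hw
        · rfl
        · rfl
      · intro h; exact absurd (Finset.mem_univ _) h
    · rw [if_neg hC]
      symm
      refine Finset.sum_eq_zero fun w _ => ?_
      split_ifs with h1 h2
      · obtain ⟨h2a, h2b⟩ := h2
        subst h2a
        exact absurd ⟨h1.1, h1.2, h2b⟩ hC
      · rfl
      · rfl

private lemma adjoint_aux {V : Type} [Fintype V] (G : SimpleGraph V) (up um : DistSp G) :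
    geodPairing G (dualTransfer G up) um = geodPairing G up (dualTransfer G um) := by
  unfold geodPairing dualTransfer
  simp only [LinearMap.comp_apply]
  refine congrArg up (Subtype.ext (funext fun cp => ?_))
  show transferFun G (fun c => um (geodInner G c)) cp
      = um (transferLM G (geodInner G cp))
  unfold transferFun
  have step1 : ∀ v : V,
      (if h : G.Adj v (cp.1 0) ∧ cp.1 1 ≠ v then
        um (geodInner G (consChain v cp h.1 h.2)) else 0)
      = um (if h : G.Adj v (cp.1 0) ∧ cp.1 1 ≠ v then
          geodInner G (consChain v cp h.1 h.2) else 0) := by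
    intro v; split_ifs
    · rfl
    · simp
  rw [Finset.sum_congr rfl fun v _ => step1 v, ← map_sum]
  refine congrArg um (Subtype.ext (funext fun cm => ?_))
  have hcoe : ((∑ v : V, if h : G.Adj v (cp.1 0) ∧ cp.1 1 ≠ v then
        geodInner G (consChain v cp h.1 h.2) else 0 : lcSub G) : ChainSp G → ℂ) cm
      = ∑ v : V, ((if h : G.Adj v (cp.1 0) ∧ cp.1 1 ≠ v then
        geodInner G (consChain v cp h.1 h.2) else 0 : lcSub G) : ChainSp G → ℂ) cm := by
    rw [AddSubmonoidClass.coe_finset_sum, Finset.sum_apply]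
  rw [hcoe]
  have step2 : ∀ v : V,
      ((if h : G.Adj v (cp.1 0) ∧ cp.1 1 ≠ v then
        geodInner G (consChain v cp h.1 h.2) else 0 : lcSub G) : ChainSp G → ℂ) cm
      = (if _h : G.Adj v (cp.1 0) ∧ cp.1 1 ≠ v then
          (if cm.1 0 = v ∧ cm.1 1 ≠ cp.1 0 then (1:ℂ) else 0) else 0) := by
    intro v
    by_cases h : G.Adj v (cp.1 0) ∧ cp.1 1 ≠ v
    · rw [dif_pos h, dif_pos h]; rfl
    · rw [dif_neg h, dif_neg h]; rfl
  rw [Finset.sum_congr rfl fun v _ => step2 v]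
  show _ = transferFun G (geodInner G cp).1 cm
  unfold transferFun
  have step3 : ∀ w : V,
      (if h : G.Adj w (cm.1 0) ∧ cm.1 1 ≠ w then
        (geodInner G cp).1 (consChain w cm h.1 h.2) else 0)
      = (if _h : G.Adj w (cm.1 0) ∧ cm.1 1 ≠ w then
          (if w = cp.1 0 ∧ cm.1 0 ≠ cp.1 1 then (1:ℂ) else 0) else 0) := by
    intro w
    by_cases h : G.Adj w (cm.1 0) ∧ cm.1 1 ≠ w
    · rw [dif_pos h, dif_pos h]; rfl
    · rw [dif_neg h, dif_neg h]
  rw [Finset.sum_congr rfl fun w _ => step3 w]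
  exact sum_step G cp cm

/-- The dual transfer operators `ℒ₊′` and `ℒ₋′` are adjoint to each other with respect
to the geodesic pairing; in particular, (co)resonant states for distinct eigenvalues
pair to zero. -/
theorem transfer_adjoint_geodesic_pairing
    (q : ℕ) (V : Type) [Fintype V] (G : SimpleGraph V) (hconn : G.Connected)
    (hreg : G.IsRegularOfDegree (q + 1)) :
    (∀ up um : DistSp G,
      geodPairing G (dualTransfer G up) um = geodPairing G up (dualTransfer G um)) ∧
    (∀ (z₁ z₂ : ℂ) (up um : DistSp G),
      dualTransfer G up = z₁ • up → dualTransfer G um = z₂ • um → z₁ ≠ z₂ →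
      geodPairing G up um = 0) := by
  refine ⟨adjoint_aux G, fun z₁ z₂ up um h1 h2 hne => ?_⟩
  have key : ∀ (up' : DistSp G) (F Fz : lcSub G) (z : ℂ),
      (Fz : ChainSp G → ℂ) = z • (F : ChainSp G → ℂ) → up' Fz = z * up' F := by
    intro up' F Fz z h
    have : Fz = z • F := Subtype.ext h
    rw [this, map_smul]; rfl
  have hL : geodPairing G (dualTransfer G up) um = z₁ * geodPairing G up um := by
    rw [h1]; unfold geodPairing
    simp only [LinearMap.smul_apply, smul_eq_mul]
  have hR : geodPairing G up (dualTransfer G um) = z₂ * geodPairing G up um := by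
    rw [h2]; unfold geodPairing
    refine key up _ _ z₂ ?_
    funext cp
    simp only [LinearMap.smul_apply, smul_eq_mul, Pi.smul_apply]
  have h := adjoint_aux G up um
  rw [hL, hR] at h
  have hz : (z₁ - z₂) * geodPairing G up um = 0 := by ring_nf; linear_combination h
  rcases mul_eq_zero.mp hz with h' | h'
  · exact absurd (sub_eq_zero.mp h') hne
  · exact h'
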